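/- Let n ≥ 1 and let U be a nonempty upset of a De Morgan lattice L. Then Cons(fgₙ(U)) is an n-filter on L, and fgₙ(Comp U) is a complete n-filter on L. -/

import Mathlib

/-- A De Morgan lattice: a distributive lattice with an antitone involution. -/
class DeMorgan (L : Type*) extends DistribLattice L where
  dneg : L → L
  dneg_dneg : ∀ x : L, dneg (dneg x) = x
  dneg_sup : ∀ x y : L, dneg (x ⊔ y) = dneg x ⊓ dneg y

prefix:max "∼" => DeMorgan.dneg

section Defs

variable {α : Type*}

/-- An upward closed subset of a lattice. -/
def IsUpset [Lattice α] (F : Set α) : Prop :=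
  ∀ ⦃x y : α⦄, x ∈ F → x ≤ y → y ∈ F

/-- A lattice filter: an upset closed under binary meets. -/
def IsLatFilter [Lattice α] (F : Set α) : Prop :=
  IsUpset F ∧ ∀ x y : α, x ∈ F → y ∈ F → x ⊓ y ∈ F

/-- An `n`-filter: an upset such that for every nonempty finite `Y`, if the meet of
every nonempty subset of `Y` of size at most `n` lies in `F`, then so does the meet of `Y`. -/
def IsNFilter [Lattice α] (n : ℕ) (F : Set α) : Prop :=
  IsUpset F ∧ ∀ (Y : Finset α) (hY : Y.Nonempty),
    (∀ (X : Finset α) (hX : X.Nonempty), X ⊆ Y → X.card ≤ n → X.inf' hX id ∈ F) →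
    Y.inf' hY id ∈ F

/-- A prime upset: `x ⊔ y ∈ F` implies `x ∈ F` or `y ∈ F`. -/
def IsPrimeUpset [Lattice α] (F : Set α) : Prop :=
  ∀ x y : α, x ⊔ y ∈ F → x ∈ F ∨ y ∈ F

/-- A downward closed subset of a lattice. -/
def IsDownset [Lattice α] (I : Set α) : Prop :=
  ∀ ⦃x y : α⦄, x ∈ I → y ≤ x → y ∈ I

/-- A lattice ideal: a downset closed under binary joins. -/
def IsIdeal [Lattice α] (I : Set α) : Prop :=
  IsDownset I ∧ ∀ x y : α, x ∈ I → y ∈ I → x ⊔ y ∈ I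

/-- An `n`-ideal: the order dual notion of an `n`-filter. -/
def IsNIdeal [Lattice α] (n : ℕ) (I : Set α) : Prop :=
  IsDownset I ∧ ∀ (Y : Finset α) (hY : Y.Nonempty),
    (∀ (X : Finset α) (hX : X.Nonempty), X ⊆ Y → X.card ≤ n → X.sup' hX id ∈ I) →
    Y.sup' hY id ∈ I

variable {L : Type*} [DeMorgan L]

/-- Almost complete upset: `x ∈ F` implies `x ⊓ (y ⊔ ∼y) ∈ F`. -/
def AlmostComplete (F : Set L) : Prop := ∀ x ∈ F, ∀ y : L, x ⊓ (y ⊔ ∼y) ∈ F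

/-- Complete upset: almost complete and nonempty. -/
def IsCompleteUpset (F : Set L) : Prop := AlmostComplete F ∧ F.Nonempty

/-- Almost consistent upset: `(x ⊓ ∼x) ⊔ y ∈ F` implies `y ∈ F`. -/
def AlmostConsistent (F : Set L) : Prop := ∀ x y : L, (x ⊓ ∼x) ⊔ y ∈ F → y ∈ F

/-- Consistent upset: almost consistent and not total. -/
def IsConsistentUpset (F : Set L) : Prop := AlmostConsistent F ∧ F ≠ Set.univ

/-- Classical upset: complete and consistent. -/
def IsClassicalUpset (F : Set L) : Prop := IsCompleteUpset F ∧ IsConsistentUpset F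

/-- Kalman upset. -/
def IsKalmanUpset (F : Set L) : Prop :=
  ∀ x y z u : L, ((x ⊓ ∼x) ⊓ z) ⊔ u ∈ F → ((y ⊔ ∼y) ⊓ z) ⊔ u ∈ F

/-- A homomorphism of De Morgan lattices. -/
def IsDMHom {L M : Type*} [DeMorgan L] [DeMorgan M] (h : L → M) : Prop :=
  (∀ x y : L, h (x ⊓ y) = h x ⊓ h y) ∧ (∀ x y : L, h (x ⊔ y) = h x ⊔ h y) ∧
    ∀ x : L, h (∼x) = ∼(h x)

/-- The filter generated by all elements of the form `x ⊔ ∼x`. -/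
def Fcomp (L : Type*) [DeMorgan L] : Set L :=
  {a | ∃ (s : Finset L) (hs : s.Nonempty), s.inf' hs (fun x => x ⊔ ∼x) ≤ a}

/-- The `n`-filter generated by a set. -/
def nFilterGen (n : ℕ) (U : Set L) : Set L :=
  ⋂₀ {F : Set L | IsNFilter n F ∧ U ⊆ F}

/-- `Comp U`. -/
def CompCl (U : Set L) : Set L := {x | ∃ a ∈ U, ∃ f ∈ Fcomp L, a ⊓ f ≤ x}

/-- `Cons U`. -/
def ConsCl (U : Set L) : Set L := {x | ∃ f ∈ Fcomp L, ∼f ⊔ x ∈ U}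

/-- A congruence of De Morgan lattices, as a binary relation. -/
def IsCongruence (θ : L → L → Prop) : Prop :=
  Equivalence θ ∧
  (∀ a b c d : L, θ a b → θ c d → θ (a ⊓ c) (b ⊓ d)) ∧
  (∀ a b c d : L, θ a b → θ c d → θ (a ⊔ c) (b ⊔ d)) ∧
  ∀ a b : L, θ a b → θ (∼a) (∼b)

end Defs

/-- The four-element De Morgan lattice `DM₁` on `Bool × Bool`. -/
instance : DeMorgan (Bool × Bool) :=
  { (inferInstance : DistribLattice (Bool × Bool)) with
    dneg := fun p => (!p.2, !p.1)
    dneg_dneg := by decide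
    dneg_sup := by decide }

/-- Powers of `DM₁`, with componentwise operations. -/
instance {ι : Type*} : DeMorgan (ι → Bool × Bool) :=
  { (inferInstance : DistribLattice (ι → Bool × Bool)) with
    dneg := fun f i => ∼(f i)
    dneg_dneg := fun f => funext fun i => DeMorgan.dneg_dneg (f i)
    dneg_sup := fun f g => funext fun i => DeMorgan.dneg_sup (f i) (g i) }

section Aux

variable {L : Type*} [DeMorgan L]

lemma dneg_antitone' {x y : L} (h : x ≤ y) : ∼y ≤ ∼x := by
  have h2 := DeMorgan.dneg_sup x y
  rw [sup_eq_right.mpr h] at h2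
  rw [h2]; exact inf_le_left

lemma mem_Fcomp_self (x : L) : x ⊔ ∼x ∈ Fcomp L :=
  ⟨{x}, Finset.singleton_nonempty x, by simp⟩

lemma Fcomp_upset {f g : L} (hf : f ∈ Fcomp L) (hfg : f ≤ g) : g ∈ Fcomp L := by
  obtain ⟨s, hs, hle⟩ := hf
  exact ⟨s, hs, hle.trans hfg⟩

lemma Fcomp_inf {f g : L} (hf : f ∈ Fcomp L) (hg : g ∈ Fcomp L) : f ⊓ g ∈ Fcomp L := by
  classical
  obtain ⟨s, hs, hsle⟩ := hf
  obtain ⟨t, ht, htle⟩ := hg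
  refine ⟨s ∪ t, hs.mono Finset.subset_union_left, ?_⟩
  rw [Finset.inf'_union hs ht]
  exact inf_le_inf hsle htle

/-- Preimage of an `n`-filter under a meet-homomorphic self-map is an `n`-filter. -/
lemma isNFilter_comap {n : ℕ} {F : Set L} (hF : IsNFilter n F) (g : L → L)
    (hg : ∀ x y : L, g (x ⊓ y) = g x ⊓ g y) : IsNFilter n {x | g x ∈ F} := by
  classical
  have hmono : ∀ x y : L, x ≤ y → g x ≤ g y := by
    intro x y hxy
    have : g x = g x ⊓ g y := by rw [← hg, inf_eq_left.mpr hxy]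
    rw [this]; exact inf_le_right
  have hinf : ∀ (s : Finset L) (hs : s.Nonempty), g (s.inf' hs id) = s.inf' hs g := by
    intro s hs
    induction hs using Finset.Nonempty.cons_induction with
    | singleton a => simp
    | cons a s ha hs ih => rw [Finset.inf'_cons, Finset.inf'_cons, hg, ih]; rfl; exact hs
  constructor
  · intro x y hx hxy
    exact hF.1 hx (hmono x y hxy)
  · intro Y hY hyp
    have key : ∀ (X' : Finset L) (hX' : X'.Nonempty), X' ⊆ Y.image g → X'.card ≤ n →
        X'.inf' hX' id ∈ F := by
      intro X' hX' hsub hcard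
      set pick : {x // x ∈ X'} → L := fun x =>
        Classical.choose (Finset.mem_image.mp (hsub x.2)) with hpick
      have hspec : ∀ x : {x // x ∈ X'}, pick x ∈ Y ∧ g (pick x) = x.1 := fun x =>
        Classical.choose_spec (Finset.mem_image.mp (hsub x.2))
      set t : Finset L := X'.attach.image pick with ht
      have htY : t ⊆ Y := by
        intro a ha
        obtain ⟨x, _, rfl⟩ := Finset.mem_image.mp ha
        exact (hspec x).1
      have htne : t.Nonempty := (hX'.attach).image pick
      have htimg : t.image g = X' := by
        apply Finset.Subset.antisymm
        · intro b hb
          obtain ⟨a, ha, rfl⟩ := Finset.mem_image.mp hb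
          obtain ⟨x, _, rfl⟩ := Finset.mem_image.mp ha
          rw [(hspec x).2]; exact x.2
        · intro b hb
          exact Finset.mem_image.mpr ⟨pick ⟨b, hb⟩, Finset.mem_image_of_mem _ (Finset.mem_attach _ _), (hspec ⟨b, hb⟩).2⟩
      have htcard : t.card ≤ n := le_trans (le_trans Finset.card_image_le (by simp)) hcard
      have hmem : t.inf' htne id ∈ {x | g x ∈ F} := hyp t htne htY htcard
      have heq : X'.inf' hX' id = t.inf' htne g := by
        apply le_antisymm
        · apply Finset.le_inf'
          intro b hb
          have hb' : g b ∈ X' := htimg ▸ Finset.mem_image_of_mem g hb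
          exact Finset.inf'_le _ hb'
        · apply Finset.le_inf'
          intro b hb
          have hb' : b ∈ t.image g := htimg.symm ▸ hb
          obtain ⟨a, ha, rfl⟩ := Finset.mem_image.mp hb'
          exact Finset.inf'_le _ ha
      rw [heq, ← hinf t htne]
      exact hmem
    have := hF.2 (Y.image g) (hY.image g) key
    rw [Finset.inf'_image] at this
    show g (Y.inf' hY id) ∈ F
    rw [hinf Y hY]
    exact this

lemma nFilterGen_isNFilter (n : ℕ) (U : Set L) : IsNFilter n (nFilterGen n U) := by
  constructor
  · intro x y hx hxy
    intro F hF
    exact hF.1.1 (hx F hF) hxy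
  · intro Y hY hyp F hF
    exact hF.1.2 Y hY fun X hX hXY hXc => hyp X hX hXY hXc F hF

lemma subset_nFilterGen (n : ℕ) (U : Set L) : U ⊆ nFilterGen n U :=
  fun _ hx _ hF => hF.2 hx

lemma nFilterGen_subset {n : ℕ} {U F : Set L} (hF : IsNFilter n F) (hUF : U ⊆ F) :
    nFilterGen n U ⊆ F := fun _ hx => hx F ⟨hF, hUF⟩

lemma exists_common_f [Nonempty L] {F : Set L} (hup : IsUpset F) (Φ : Finset L)
    (h : ∀ x ∈ Φ, x ∈ ConsCl F) : ∃ f ∈ Fcomp L, ∀ x ∈ Φ, ∼f ⊔ x ∈ F := by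
  classical
  induction Φ using Finset.induction with
  | empty =>
    exact ⟨Classical.arbitrary L ⊔ ∼(Classical.arbitrary L), mem_Fcomp_self _, by simp⟩
  | insert a s ha ih =>
    obtain ⟨fa, hfa, hFa⟩ := h a (Finset.mem_insert_self a s)
    obtain ⟨fs, hfs, hall⟩ := ih fun x hx => h x (Finset.mem_insert_of_mem hx)
    refine ⟨fa ⊓ fs, Fcomp_inf hfa hfs, ?_⟩
    intro x hx
    rcases Finset.mem_insert.mp hx with rfl | hx
    · exact hup hFa (sup_le_sup_right (dneg_antitone' inf_le_left) x)
    · exact hup (hall x hx) (sup_le_sup_right (dneg_antitone' inf_le_right) x)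

end Aux

/-- for a nonempty upset `U`, `Cons (fgₙ U)` is an `n`-filter and
`fgₙ (Comp U)` is a complete `n`-filter. -/
theorem statement14 {L : Type*} [DeMorgan L] [Nonempty L] (n : ℕ) (hn : 1 ≤ n)
    (U : Set L) (hU : IsUpset U) (hne : U.Nonempty) :
    IsNFilter n (ConsCl (nFilterGen n U)) ∧
    (IsNFilter n (nFilterGen n (CompCl U)) ∧ IsCompleteUpset (nFilterGen n (CompCl U))) := by
  classical
  set F := nFilterGen n U with hFdef
  have hF : IsNFilter n F := nFilterGen_isNFilter n U
  refine ⟨⟨?_, ?_⟩, nFilterGen_isNFilter n (CompCl U), ?_, ?_⟩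
  · -- ConsCl F is an upset
    rintro x y ⟨f, hf, hx⟩ hxy
    exact ⟨f, hf, hF.1 hx (sup_le_sup_left hxy _)⟩
  · -- n-filter condition for ConsCl F
    intro Y hY hyp
    -- collect the finitely many relevant infima
    set S : Finset (Finset L) := Y.powerset.filter (fun X => X ≠ ∅ ∧ X.card ≤ n) with hS
    have hSne : ∀ X ∈ S, X.Nonempty := by
      intro X hX
      exact Finset.nonempty_of_ne_empty ((Finset.mem_filter.mp hX).2.1)
    set T : Finset L := S.attach.image
      (fun X => X.1.inf' (Finset.nonempty_of_ne_empty
        ((Finset.mem_filter.mp X.2).2.1)) id) with hT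
    have hTcons : ∀ x ∈ T, x ∈ ConsCl F := by
      intro x hx
      obtain ⟨X, _, rfl⟩ := Finset.mem_image.mp hx
      have hXm := Finset.mem_filter.mp X.2
      exact hyp X.1 _ (Finset.mem_powerset.mp hXm.1) hXm.2.2
    obtain ⟨f, hf, hall⟩ := exists_common_f hF.1 T hTcons
    have hGf : IsNFilter n {x | ∼f ⊔ x ∈ F} :=
      isNFilter_comap hF (fun x => ∼f ⊔ x) (fun x y => sup_inf_left _ _ _)
    have : Y.inf' hY id ∈ {x | ∼f ⊔ x ∈ F} := by
      apply hGf.2 Y hY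
      intro X hX hXY hXc
      have hXS : X ∈ S := Finset.mem_filter.mpr
        ⟨Finset.mem_powerset.mpr hXY, hX.ne_empty, hXc⟩
      have : X.inf' hX id ∈ T :=
        Finset.mem_image.mpr ⟨⟨X, hXS⟩, Finset.mem_attach _ _, rfl⟩
      exact hall _ this
    exact ⟨f, hf, this⟩
  · -- AlmostComplete
    intro x hx y
    set c := y ⊔ ∼y with hc
    have hG : IsNFilter n (nFilterGen n (CompCl U)) := nFilterGen_isNFilter n (CompCl U)
    have hH : IsNFilter n {z | z ⊓ c ∈ nFilterGen n (CompCl U)} :=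
      isNFilter_comap hG (fun z => z ⊓ c) (fun a b =>
        inf_inf_distrib_right a b c)
    have hsub : CompCl U ⊆ {z | z ⊓ c ∈ nFilterGen n (CompCl U)} := by
      rintro z ⟨a, ha, g, hg, hle⟩
      apply subset_nFilterGen n (CompCl U)
      exact ⟨a, ha, g ⊓ c, Fcomp_inf hg (mem_Fcomp_self y), by
        calc a ⊓ (g ⊓ c) = (a ⊓ g) ⊓ c := (inf_assoc a g c).symm
        _ ≤ z ⊓ c := inf_le_inf_right c hle⟩
    exact nFilterGen_subset hH hsub hx
  · -- Nonempty
    obtain ⟨a, ha⟩ := hne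
    exact ⟨a, subset_nFilterGen n (CompCl U)
      ⟨a, ha, a ⊔ ∼a, mem_Fcomp_self a, inf_le_left⟩⟩
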